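/- Let (P_n) be a sequence of monic polynomials with deg P_n = n satisfying the three-term recurrence x·P_n(x) = P_{n+1}(x) + a_n P_n(x) + λ_n P_{n−1}(x) with λ_0 = 0, and let μ be the linear functional on polynomials with μ(P_0) = 1 and μ(P_n) = 0 for n ≥ 1. Then μ(P_m P_n) = 0 for m ≠ n and μ(P_n²) = λ_1 λ_2 ⋯ λ_n. -/
import Mathlib


open Polynomial

/-- Orthogonality of polynomials from the three-term recurrence: if `(P_n)` are monic
of degree `n` with `x·P_n = P_{n+1} + a_n P_n + λ_n P_{n−1}` (`λ_0 = 0`, and for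
`n = 0` the index `n - 1` is the truncated subtraction, harmless since `λ_0 = 0`),
and `μ` is the linear functional with `μ(P_0) = 1` and `μ(P_n) = 0` for `n ≥ 1`,
then `μ(P_m P_n) = 0` for `m ≠ n` and `μ(P_n²) = λ_1 λ_2 ⋯ λ_n`. -/
theorem orthogonal_polynomials_three_term
    {R : Type*} [CommRing R] (a lam : ℕ → R) (hlam0 : lam 0 = 0)
    (P : ℕ → R[X]) (hmonic : ∀ n, (P n).Monic) (hdeg : ∀ n, (P n).natDegree = n)
    (hrec : ∀ n, X * P n = P (n + 1) + C (a n) * P n + C (lam n) * P (n - 1))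
    (μ : R[X] →ₗ[R] R) (hμ0 : μ (P 0) = 1) (hμ : ∀ n, 1 ≤ n → μ (P n) = 0) :
    (∀ m n, m ≠ n → μ (P m * P n) = 0) ∧
      (∀ n, μ (P n * P n) = ∏ k ∈ Finset.Icc 1 n, lam k) := by
  have hμC : ∀ (c : R) (p : R[X]), μ (C c * p) = c * μ p := by
    intro c p
    rw [← smul_eq_C_mul, map_smul, smul_eq_mul]
  have hP0 : P 0 = 1 := by
    have h := hdeg 0
    exact (hmonic 0).natDegree_eq_zero.mp h
  have key : ∀ m, ∀ n, m ≤ n →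
      μ (P m * P n) = if n = m then ∏ k ∈ Finset.Icc 1 m, lam k else 0 := by
    intro m
    induction m using Nat.strong_induction_on with
    | _ m IH =>
      match m with
      | 0 =>
        intro n _
        rw [hP0, one_mul]
        rcases Nat.eq_zero_or_pos n with h | h
        · simp [h, hμ0]
        · rw [hμ n h, if_neg (by omega)]
      | m' + 1 =>
        intro n hn
        have heq : μ ((P (m' + 1) + C (a m') * P m' + C (lam m') * P (m' - 1)) * P n)
            = μ ((P (n + 1) + C (a n) * P n + C (lam n) * P (n - 1)) * P m') := by
          rw [← hrec, ← hrec]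
          congr 1
          ring
        have heq2 : μ (P (m' + 1) * P n) + a m' * μ (P m' * P n)
              + lam m' * μ (P (m' - 1) * P n)
            = μ (P (n + 1) * P m') + a n * μ (P n * P m')
              + lam n * μ (P (n - 1) * P m') := by
          rw [add_mul, add_mul, add_mul, add_mul, mul_assoc, mul_assoc, mul_assoc,
            mul_assoc] at heq
          simpa [hμC] using heq
        have e1 : μ (P m' * P n) = 0 := by
          rw [IH m' (by omega) n (by omega), if_neg (by omega)]
        have e2 : lam m' * μ (P (m' - 1) * P n) = 0 := by
          match m' with
          | 0 => rw [hlam0, zero_mul]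
          | k + 1 =>
            simp only [Nat.add_sub_cancel]
            rw [IH k (by omega) n (by omega), if_neg (by omega), mul_zero]
        have e3 : μ (P (n + 1) * P m') = 0 := by
          rw [mul_comm, IH m' (by omega) (n + 1) (by omega), if_neg (by omega)]
        have e4 : μ (P n * P m') = 0 := by
          rw [mul_comm, IH m' (by omega) n (by omega), if_neg (by omega)]
        have e5 : μ (P (n - 1) * P m')
            = if n - 1 = m' then ∏ k ∈ Finset.Icc 1 m', lam k else 0 := by
          rw [mul_comm]; exact IH m' (by omega) (n - 1) (by omega)
        rw [e1, e2, e3, e4, e5] at heq2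
        simp only [mul_zero, add_zero, zero_add, zero_mul] at heq2
        rw [heq2]
        by_cases h : n = m' + 1
        · rw [if_pos h, if_pos (by omega), h, Finset.prod_Icc_succ_top (by omega)]
          ring
        · rw [if_neg (by omega), if_neg h, mul_zero]
  constructor
  · intro m n hmn
    rcases lt_or_gt_of_ne hmn with h | h
    · rw [key m n (by omega), if_neg (by omega)]
    · rw [mul_comm, key n m (by omega), if_neg (by omega)]
  · intro n
    rw [key n n le_rfl, if_pos rfl]
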